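/- In ℚ[y₁,…,y₄], let P be the product of the factors (1 − (y_i+y_j)²)(1 − (y_i−y_j)²) over all pairs 1 ≤ i < j ≤ 4, times the product of the factors (1 − (ε₁y₁+ε₂y₂+ε₃y₃+y₄)²) over all triples (ε₁,ε₂,ε₃) ∈ {±1}³. Then the degree-2 homogeneous component of P equals −14·(y₁²+y₂²+y₃²+y₄²), and the degree-4 homogeneous component of P equals 91·Σ_{i=1}^4 y_i⁴ + 166·Σ_{1≤i<j≤4} y_i² y_j². -/

import Mathlib

open MvPolynomial Finset

private lemma hc_mul_homog {σ : Type*} {q : MvPolynomial σ ℚ} {d : ℕ}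
    (hq : q.IsHomogeneous d) (f : MvPolynomial σ ℚ) (n : ℕ) :
    homogeneousComponent (n + d) (q * f) = q * homogeneousComponent n f := by
  nth_rewrite 1 [← sum_homogeneousComponent f]
  rw [Finset.mul_sum, map_sum]
  have h : ∀ i ∈ Finset.range (f.totalDegree + 1),
      homogeneousComponent (n + d) (q * homogeneousComponent i f)
        = if i = n then q * homogeneousComponent n f else 0 := by
    intro i _
    rw [homogeneousComponent_of_mem (n := d + i) ((mem_homogeneousSubmodule _ _).2
      (hq.mul (homogeneousComponent_isHomogeneous i f)))]
    by_cases h : i = n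
    · subst h; rw [if_pos (by omega), if_pos rfl]
    · rw [if_neg (by omega), if_neg h]
  rw [Finset.sum_congr rfl h, Finset.sum_ite_eq' (Finset.range _) n]
  by_cases hn : n ∈ Finset.range (f.totalDegree + 1)
  · rw [if_pos hn]
  · rw [if_neg hn, homogeneousComponent_eq_zero, mul_zero]
    simp only [Finset.mem_range] at hn; omega

private lemma hc_mul_homog_lt {σ : Type*} {q : MvPolynomial σ ℚ} {d : ℕ}
    (hq : q.IsHomogeneous d) (f : MvPolynomial σ ℚ) {n : ℕ} (hn : n < d) :
    homogeneousComponent n (q * f) = 0 := by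
  nth_rewrite 1 [← sum_homogeneousComponent f]
  rw [Finset.mul_sum, map_sum]
  refine Finset.sum_eq_zero fun i _ => ?_
  rw [homogeneousComponent_of_mem (n := d + i) ((mem_homogeneousSubmodule _ _).2
    (hq.mul (homogeneousComponent_isHomogeneous i f))), if_neg (by omega)]

private lemma good_prod {ι σ : Type*} [DecidableEq ι] (s : Finset ι)
    (q : ι → MvPolynomial σ ℚ) (hq : ∀ k, (q k).IsHomogeneous 2) :
    homogeneousComponent 0 (∏ k ∈ s, (1 - q k)) = 1 ∧
    homogeneousComponent 2 (∏ k ∈ s, (1 - q k)) = -∑ k ∈ s, q k ∧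
    2 * homogeneousComponent 4 (∏ k ∈ s, (1 - q k))
      = (∑ k ∈ s, q k) ^ 2 - ∑ k ∈ s, q k ^ 2 := by
  have h1 : ∀ n, homogeneousComponent n (1 : MvPolynomial σ ℚ)
      = if n = 0 then 1 else 0 := fun n =>
    homogeneousComponent_of_mem ((mem_homogeneousSubmodule _ _).2 (isHomogeneous_one σ ℚ))
  induction s using Finset.induction with
  | empty => simp [h1]
  | @insert a s ha ih =>
    obtain ⟨i0, i2, i4⟩ := ih
    rw [Finset.prod_insert ha, Finset.sum_insert ha, Finset.sum_insert ha, one_sub_mul]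
    have k0 : homogeneousComponent 0 (q a * ∏ k ∈ s, (1 - q k)) = 0 :=
      hc_mul_homog_lt (hq a) _ (by norm_num)
    have k2 : homogeneousComponent 2 (q a * ∏ k ∈ s, (1 - q k))
        = q a * homogeneousComponent 0 (∏ k ∈ s, (1 - q k)) :=
      hc_mul_homog (hq a) _ 0
    have k4 : homogeneousComponent 4 (q a * ∏ k ∈ s, (1 - q k))
        = q a * homogeneousComponent 2 (∏ k ∈ s, (1 - q k)) :=
      hc_mul_homog (hq a) _ 2
    refine ⟨?_, ?_, ?_⟩
    · rw [map_sub, i0, k0, sub_zero]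
    · rw [map_sub, i2, k2, i0]; ring
    · rw [map_sub, k4]
      linear_combination i4 - 2 * (q a) * i2

private noncomputable def qE6 :
    ((Σ _ : Fin 4, Fin 4) ⊕ (Σ _ : Fin 4, Fin 4)) ⊕ Finset (Fin 3) →
      MvPolynomial (Fin 4) ℚ
  | .inl (.inl ⟨i, j⟩) => (X i + X j) ^ 2
  | .inl (.inr ⟨i, j⟩) => (X i - X j) ^ 2
  | .inr s => ((∑ i : Fin 3, C (if i ∈ s then (-1 : ℚ) else 1) * X i.castSucc) + X 3) ^ 2

private def KE6 : Finset (((Σ _ : Fin 4, Fin 4) ⊕ (Σ _ : Fin 4, Fin 4)) ⊕ Finset (Fin 3)) :=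
  ((univ.sigma fun i => Ioi i).disjSum (univ.sigma fun i => Ioi i)).disjSum univ

/-- In `ℚ[y₁,…,y₄]`, the product of the factors `(1−(yᵢ+yⱼ)²)(1−(yᵢ−yⱼ)²)` over
pairs `i < j` and of `(1−(ε₁y₁+ε₂y₂+ε₃y₃+y₄)²)` over all `(ε₁,ε₂,ε₃) ∈ {±1}³`
(encoded by subsets `s ⊆ Fin 3` of indices with sign `−1`) has degree-2
homogeneous component `−14·Σ yᵢ²` and degree-4 homogeneous component
`91·Σ yᵢ⁴ + 166·Σ_{i<j} yᵢ²yⱼ²`. -/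
theorem chern_class_E6_6_isotropy :
    let P : MvPolynomial (Fin 4) ℚ :=
      (∏ i : Fin 4, ∏ j ∈ Finset.Ioi i,
        ((1 - (X i + X j) ^ 2) * (1 - (X i - X j) ^ 2))) *
      ∏ s : Finset (Fin 3),
        (1 - ((∑ i : Fin 3, C (if i ∈ s then (-1 : ℚ) else 1) * X i.castSucc)
          + X 3) ^ 2)
    homogeneousComponent 2 P = C (-14 : ℚ) * ∑ i : Fin 4, X i ^ 2
    ∧ homogeneousComponent 4 P
      = C (91 : ℚ) * (∑ i : Fin 4, X i ^ 4)
        + C (166 : ℚ) * ∑ i : Fin 4, ∑ j ∈ Finset.Ioi i, X i ^ 2 * X j ^ 2 := by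
  intro P
  have hqf : ∀ k, (qE6 k).IsHomogeneous 2 := by
    rintro (⟨⟨i, j⟩ | ⟨i, j⟩⟩ | s)
    · exact ((isHomogeneous_X ℚ i).add (isHomogeneous_X ℚ j)).pow 2
    · exact ((isHomogeneous_X ℚ i).sub (isHomogeneous_X ℚ j)).pow 2
    · exact ((IsHomogeneous.sum univ _ 1 fun i _ =>
        isHomogeneous_C_mul_X _ _).add (isHomogeneous_X ℚ 3)).pow 2
  have hP : P = ∏ k ∈ KE6, (1 - qE6 k) := by
    show (∏ i : Fin 4, ∏ j ∈ Finset.Ioi i,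
        ((1 - (X i + X j) ^ 2) * (1 - (X i - X j) ^ 2))) *
      ∏ s : Finset (Fin 3),
        (1 - ((∑ i : Fin 3, C (if i ∈ s then (-1 : ℚ) else 1) * X i.castSucc)
          + X 3) ^ 2) = _
    rw [KE6, Finset.prod_disjSum, Finset.prod_disjSum, Finset.prod_sigma,
      Finset.prod_sigma, ← Finset.prod_mul_distrib]
    simp only [qE6]
    rw [← Finset.prod_congr rfl fun i _ => Finset.prod_mul_distrib]
  have e0 : Ioi (0 : Fin 4) = {1, 2, 3} := by decide
  have e1 : Ioi (1 : Fin 4) = {2, 3} := by decide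
  have e2 : Ioi (2 : Fin 4) = {3} := by decide
  have e3 : Ioi (3 : Fin 4) = (∅ : Finset (Fin 4)) := by decide
  have eu : (univ : Finset (Finset (Fin 3))) =
      {∅, {0}, {1}, {2}, {0, 1}, {0, 2}, {1, 2}, {0, 1, 2}} := by decide
  have c0 : (0 : Fin 3).castSucc = (0 : Fin 4) := rfl
  have c1 : (1 : Fin 3).castSucc = (1 : Fin 4) := rfl
  have c2 : (2 : Fin 3).castSucc = (2 : Fin 4) := rfl
  have hS : ∑ k ∈ KE6, qE6 k = 14 * ∑ i : Fin 4, X i ^ 2 := by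
    rw [KE6, Finset.sum_disjSum, Finset.sum_disjSum, Finset.sum_sigma, Finset.sum_sigma]
    simp only [qE6]
    rw [eu]
    simp (config := { decide := true }) only [Fin.sum_univ_four, Fin.sum_univ_three,
      e0, e1, e2, e3, c0, c1, c2, Finset.sum_insert, Finset.sum_singleton,
      Finset.sum_empty, Finset.mem_insert, Finset.mem_singleton, Finset.notMem_empty,
      if_true, if_false, map_neg, map_one]
    ring
  have hQ : (∑ k ∈ KE6, qE6 k) ^ 2 - ∑ k ∈ KE6, qE6 k ^ 2
      = 2 * (91 * (∑ i : Fin 4, X i ^ 4)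
        + 166 * ∑ i : Fin 4, ∑ j ∈ Finset.Ioi i, X i ^ 2 * X j ^ 2) := by
    rw [hS, KE6, Finset.sum_disjSum, Finset.sum_disjSum, Finset.sum_sigma,
      Finset.sum_sigma]
    simp only [qE6]
    rw [eu]
    simp (config := { decide := true }) only [Fin.sum_univ_four, Fin.sum_univ_three,
      e0, e1, e2, e3, c0, c1, c2, Finset.sum_insert, Finset.sum_singleton,
      Finset.sum_empty, Finset.mem_insert, Finset.mem_singleton, Finset.notMem_empty,
      if_true, if_false, map_neg, map_one]
    ring
  obtain ⟨-, g2, g4⟩ := good_prod KE6 qE6 hqf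
  constructor
  · rw [hP, g2, hS]
    have h14 : (C (-14 : ℚ) : MvPolynomial (Fin 4) ℚ) = -14 := by
      rw [map_neg, map_ofNat]
    rw [h14]; ring
  · have h2 : (2 : MvPolynomial (Fin 4) ℚ) ≠ 0 := two_ne_zero
    apply mul_left_cancel₀ h2
    rw [hP, g4, hQ]
    have h91 : (C (91 : ℚ) : MvPolynomial (Fin 4) ℚ) = 91 := map_ofNat _ _
    have h166 : (C (166 : ℚ) : MvPolynomial (Fin 4) ℚ) = 166 := map_ofNat _ _
    rw [h91, h166]
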